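/- Under the Fast PALM algorithm (θ_0 = β_0 = 1, θ_{k+1} = (−θ_k² + √(θ_k⁴+4θ_k²))/2, β_k = 1/θ_k, with interpolation updates y^{k+1} = (1−θ_k)x^k + θ_k z^k, x^{k+1} = (1−θ_k)x^k + θ_k z^{k+1}, dual update λ^{k+1} = λ^k + β_k(A z^{k+1} − b), and z^{k+1} minimizing the linearized augmented Lagrangian subproblem), for any K ≥ 0 the iterate x^{K+1} satisfies f(x^{K+1}) − f(x*) + ⟨λ*, A x^{K+1} − b⟩ + (1/2)‖A x^{K+1} − b‖² ≤ (2/(K+2)²)(L‖z^0 − x*‖² + ‖λ^0 − λ*‖²). -/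

import Mathlib

open scoped RealInnerProductSpace

section Aux

variable {E F : Type*} [NormedAddCommGroup E] [InnerProductSpace ℝ E]
  [NormedAddCommGroup F] [InnerProductSpace ℝ F]

theorem my_norm_combo (a b : F) (t : ℝ) :
    ‖(1-t)•a + t•b‖^2 = (1-t)*‖a‖^2 + t*‖b‖^2 - t*(1-t)*‖a-b‖^2 := by
  simp only [← real_inner_self_eq_norm_sq, inner_add_left, inner_add_right,
    inner_sub_left, inner_sub_right, real_inner_smul_left, real_inner_smul_right]
  ring_nf

theorem my_norm_add_smul (a v : F) (s : ℝ) :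
    ‖a + s•v‖^2 = ‖a‖^2 + 2*s*⟪a,v⟫ + s^2*‖v‖^2 := by
  simp only [← real_inner_self_eq_norm_sq, inner_add_left, inner_add_right,
    real_inner_smul_left, real_inner_smul_right, real_inner_comm a v]
  ring_nf

theorem my_descent [CompleteSpace E] (g : E → ℝ) (g' : E → E) (L : ℝ) (hL : 0 ≤ L)
    (hgrad : ∀ x, HasGradientAt g (g' x) x)
    (hlip : ∀ x y, ‖g' x - g' y‖ ≤ L * ‖x - y‖) (x y : E) :
    g x ≤ g y + ⟪g' y, x - y⟫ + L / 2 * ‖x - y‖ ^ 2 := by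
  have key : ∀ t : ℝ, HasDerivAt (fun s : ℝ => g (y + s • (x - y)))
      ⟪g' (y + t • (x - y)), x - y⟫ t := by
    intro t
    have h1 : HasDerivAt (fun s : ℝ => y + s • (x - y)) (x - y) t := by
      simpa using ((hasDerivAt_id t).smul_const (x - y)).const_add y
    have h2 := (hgrad (y + t • (x - y))).hasFDerivAt.comp_hasDerivAt t h1
    simp [InnerProductSpace.toDual_apply_apply] at h2; exact h2
  have hgc : Continuous g' := by
    have : LipschitzWith (Real.toNNReal L) g' := by
      apply LipschitzWith.of_dist_le_mul
      intro a b
      simpa [dist_eq_norm, Real.coe_toNNReal L hL] using hlip a b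
    exact this.continuous
  have cont : Continuous fun t : ℝ => ⟪g' (y + t • (x - y)), x - y⟫ :=
    Continuous.inner (hgc.comp (by continuity)) continuous_const
  have ftc := intervalIntegral.integral_eq_sub_of_hasDerivAt
    (f := fun s : ℝ => g (y + s • (x - y))) (fun t _ => key t)
    (cont.intervalIntegrable 0 1)
  simp only [one_smul, zero_smul, add_zero, add_sub_cancel] at ftc
  have hmono : ∫ t in (0:ℝ)..1, ⟪g' (y + t • (x - y)), x - y⟫ ≤
      ∫ t in (0:ℝ)..1, (⟪g' y, x - y⟫ + L * t * ‖x - y‖ ^ 2) := by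
    apply intervalIntegral.integral_mono_on (by norm_num)
      (cont.intervalIntegrable 0 1)
      (by apply Continuous.intervalIntegrable; fun_prop)
    intro t ht
    have h3 : ⟪g' (y + t • (x - y)) - g' y, x - y⟫ ≤ L * t * ‖x - y‖ ^ 2 := by
      calc ⟪g' (y + t • (x - y)) - g' y, x - y⟫ ≤ ‖g' (y + t • (x - y)) - g' y‖ * ‖x - y‖ :=
            real_inner_le_norm _ _
        _ ≤ (L * ‖(y + t • (x - y)) - y‖) * ‖x - y‖ := by
            apply mul_le_mul_of_nonneg_right (hlip _ _) (norm_nonneg _)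
        _ = L * t * ‖x - y‖ ^ 2 := by
            rw [add_sub_cancel_left, norm_smul]
            simp [abs_of_nonneg ht.1]
            ring
    have h4 : ⟪g' (y + t • (x - y)) - g' y, x - y⟫ =
        ⟪g' (y + t • (x - y)), x - y⟫ - ⟪g' y, x - y⟫ := inner_sub_left _ _ _
    linarith
  have hval : ∫ t in (0:ℝ)..1, (⟪g' y, x - y⟫ + L * t * ‖x - y‖ ^ 2) =
      ⟪g' y, x - y⟫ + L / 2 * ‖x - y‖ ^ 2 := by
    have heq : (fun t : ℝ => ⟪g' y, x - y⟫ + L * t * ‖x - y‖ ^ 2) =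
        fun t : ℝ => ⟪g' y, x - y⟫ + (L * ‖x - y‖ ^ 2) * t := by
      funext t; ring
    rw [heq, intervalIntegral.integral_add (intervalIntegrable_const)
      (by apply Continuous.intervalIntegrable; fun_prop),
      intervalIntegral.integral_const, intervalIntegral.integral_const_mul, integral_id]
    simp
    ring
  linarith [ftc, hmono, hval]

theorem my_grad_convex [CompleteSpace E] (g : E → ℝ) (g' : E → E) (L : ℝ) (hL : 0 ≤ L)
    (hgconv : ConvexOn ℝ Set.univ g)
    (hgrad : ∀ x, HasGradientAt g (g' x) x)
    (hlip : ∀ x y, ‖g' x - g' y‖ ≤ L * ‖x - y‖) (y u : E) :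
    g y + ⟪g' y, u - y⟫ ≤ g u := by
  apply le_of_forall_pos_le_add
  intro ε hε
  have hC : (0:ℝ) ≤ 3*L/2*‖u-y‖^2 := by positivity
  set t : ℝ := min 1 (ε/(3*L/2*‖u-y‖^2+1)) with htdef
  have ht0 : 0 < t := lt_min one_pos (div_pos hε (by linarith))
  have ht1 : t ≤ 1 := min_le_left _ _
  have htC : t * (3*L/2*‖u-y‖^2) ≤ ε := by
    have h1 : t * (3*L/2*‖u-y‖^2) ≤ (ε/(3*L/2*‖u-y‖^2+1)) * (3*L/2*‖u-y‖^2) :=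
      mul_le_mul_of_nonneg_right (min_le_right _ _) hC
    have h2 : (ε/(3*L/2*‖u-y‖^2+1)) * (3*L/2*‖u-y‖^2) ≤ ε := by
      rw [div_mul_eq_mul_div, div_le_iff₀ (by linarith)]
      nlinarith
    linarith
  set w : E := (1-t)•y + t•u with hwdef
  have hconv : g w ≤ (1-t)*g y + t*g u :=
    hgconv.2 (Set.mem_univ y) (Set.mem_univ u) (by linarith) ht0.le (by ring)
  have hdesc := my_descent g g' L hL hgrad hlip y w
  have hyw : y - w = (-t)•(u-y) := by rw [hwdef]; module
  have hywn : ‖y - w‖^2 = t^2*‖u-y‖^2 := by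
    rw [hyw, norm_smul]
    simp [mul_pow, sq_abs]
  have hywi : ⟪g' w, y - w⟫ = -(t*⟪g' w, u - y⟫) := by
    rw [hyw, real_inner_smul_right]; ring
  have hlipw : -(L*t*‖u-y‖^2) ≤ ⟪g' w - g' y, u - y⟫ := by
    have h3 : ⟪g' y - g' w, u - y⟫ ≤ ‖g' y - g' w‖ * ‖u - y‖ := real_inner_le_norm _ _
    have h4 : ‖g' y - g' w‖ ≤ L * ‖y - w‖ := hlip _ _
    have h5 : ‖y - w‖ = t * ‖u - y‖ := by
      rw [hyw, norm_smul]
      simp [abs_of_pos ht0]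
    have h6 : ⟪g' y - g' w, u - y⟫ = -⟪g' w - g' y, u - y⟫ := by
      rw [show g' y - g' w = -(g' w - g' y) by abel, inner_neg_left]
    rw [h5] at h4
    have h7 := mul_le_mul_of_nonneg_right h4 (norm_nonneg (u - y))
    nlinarith [h7]
  have h7 := mul_le_mul_of_nonneg_left hlipw ht0.le
  have h8 : t*⟪g' w - g' y, u - y⟫ = t*⟪g' w, u - y⟫ - t*⟪g' y, u - y⟫ := by
    rw [inner_sub_left]; ring
  have h9 := mul_le_mul_of_nonneg_left htC ht0.le
  have hgoal : t * (g y + ⟪g' y, u - y⟫) ≤ t * (g u + ε) := by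
    nlinarith
  exact le_of_mul_le_mul_left hgoal ht0

theorem my_strong_min (h : E → ℝ) (hhconv : ConvexOn ℝ Set.univ h)
    (A : E →L[ℝ] F) (b : F) (c : E) (lamk : F) (bk mu : ℝ) (hbk : 0 ≤ bk) (hmu : 0 ≤ mu)
    (z0 zm : E)
    (hmin : ∀ u : E, ⟪c, zm⟫ + h zm + ⟪lamk, A zm⟫ + bk / 2 * ‖A zm - b‖ ^ 2 +
        mu / 2 * ‖zm - z0‖ ^ 2 ≤
      ⟪c, u⟫ + h u + ⟪lamk, A u⟫ + bk / 2 * ‖A u - b‖ ^ 2 + mu / 2 * ‖u - z0‖ ^ 2)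
    (u : E) :
    ⟪c, zm⟫ + h zm + ⟪lamk, A zm⟫ + bk / 2 * ‖A zm - b‖ ^ 2 + mu / 2 * ‖zm - z0‖ ^ 2
      + bk / 2 * ‖A u - A zm‖ ^ 2 + mu / 2 * ‖u - zm‖ ^ 2 ≤
    ⟪c, u⟫ + h u + ⟪lamk, A u⟫ + bk / 2 * ‖A u - b‖ ^ 2 + mu / 2 * ‖u - z0‖ ^ 2 := by
  have hS : (0:ℝ) ≤ bk * ‖A u - A zm‖ ^ 2 + mu * ‖u - zm‖ ^ 2 := by positivity
  rw [show ⟪c, zm⟫ + h zm + ⟪lamk, A zm⟫ + bk / 2 * ‖A zm - b‖ ^ 2 + mu / 2 * ‖zm - z0‖ ^ 2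
      + bk / 2 * ‖A u - A zm‖ ^ 2 + mu / 2 * ‖u - zm‖ ^ 2 =
      (⟪c, zm⟫ + h zm + ⟪lamk, A zm⟫ + bk / 2 * ‖A zm - b‖ ^ 2 + mu / 2 * ‖zm - z0‖ ^ 2)
      + (bk * ‖A u - A zm‖ ^ 2 + mu * ‖u - zm‖ ^ 2)/2 by ring]
  apply le_of_forall_pos_le_add
  intro ε hε
  set t : ℝ := min 1 (ε/(bk * ‖A u - A zm‖ ^ 2 + mu * ‖u - zm‖ ^ 2+1)) with htdef
  have ht0 : 0 < t := lt_min one_pos (div_pos hε (by linarith))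
  have ht1 : t ≤ 1 := min_le_left _ _
  have htS : t * (bk * ‖A u - A zm‖ ^ 2 + mu * ‖u - zm‖ ^ 2) ≤ ε := by
    have h1 : t * (bk * ‖A u - A zm‖ ^ 2 + mu * ‖u - zm‖ ^ 2) ≤
        (ε/(bk * ‖A u - A zm‖ ^ 2 + mu * ‖u - zm‖ ^ 2+1)) *
        (bk * ‖A u - A zm‖ ^ 2 + mu * ‖u - zm‖ ^ 2) :=
      mul_le_mul_of_nonneg_right (min_le_right _ _) hS
    have h2 : (ε/(bk * ‖A u - A zm‖ ^ 2 + mu * ‖u - zm‖ ^ 2+1)) *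
        (bk * ‖A u - A zm‖ ^ 2 + mu * ‖u - zm‖ ^ 2) ≤ ε := by
      rw [div_mul_eq_mul_div, div_le_iff₀ (by linarith)]
      nlinarith
    exact h1.trans h2
  set w : E := (1-t)•zm + t•u with hwdef
  have hmw := hmin w
  have hconv : h w ≤ (1-t)*h zm + t*h u :=
    hhconv.2 (Set.mem_univ zm) (Set.mem_univ u) (by linarith) ht0.le (by ring)
  have ec : ⟪c, w⟫ = (1-t)*⟪c, zm⟫ + t*⟪c, u⟫ := by
    rw [hwdef, inner_add_right, real_inner_smul_right, real_inner_smul_right]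
  have eA : A w = (1-t)•(A zm) + t•(A u) := by
    rw [hwdef]; simp [map_add, map_smul]
  have elam : ⟪lamk, A w⟫ = (1-t)*⟪lamk, A zm⟫ + t*⟪lamk, A u⟫ := by
    rw [eA, inner_add_right, real_inner_smul_right, real_inner_smul_right]
  have enA : ‖A w - b‖^2 = (1-t)*‖A zm - b‖^2 + t*‖A u - b‖^2 - t*(1-t)*‖A u - A zm‖^2 := by
    have e1 : A w - b = (1-t)•(A zm - b) + t•(A u - b) := by rw [eA]; module
    rw [e1, my_norm_combo]
    rw [show A zm - b - (A u - b) = -(A u - A zm) by abel, norm_neg]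
  have enz : ‖w - z0‖^2 = (1-t)*‖zm - z0‖^2 + t*‖u - z0‖^2 - t*(1-t)*‖u - zm‖^2 := by
    have e1 : w - z0 = (1-t)•(zm - z0) + t•(u - z0) := by rw [hwdef]; module
    rw [e1, my_norm_combo]
    rw [show zm - z0 - (u - z0) = -(u - zm) by abel, norm_neg]
  have enA' : bk/2*‖A w - b‖^2 = bk/2*((1-t)*‖A zm - b‖^2 + t*‖A u - b‖^2
      - t*(1-t)*‖A u - A zm‖^2) := by rw [enA]
  have enz' : mu/2*‖w - z0‖^2 = mu/2*((1-t)*‖zm - z0‖^2 + t*‖u - z0‖^2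
      - t*(1-t)*‖u - zm‖^2) := by rw [enz]
  have h9 := mul_le_mul_of_nonneg_left htS ht0.le
  have hgoal : t * ((⟪c, zm⟫ + h zm + ⟪lamk, A zm⟫ + bk / 2 * ‖A zm - b‖ ^ 2 +
      mu / 2 * ‖zm - z0‖ ^ 2) + (bk * ‖A u - A zm‖ ^ 2 + mu * ‖u - zm‖ ^ 2)/2) ≤
      t * ((⟪c, u⟫ + h u + ⟪lamk, A u⟫ + bk / 2 * ‖A u - b‖ ^ 2 + mu / 2 * ‖u - z0‖ ^ 2) + ε) := by
    linarith [hmw, hconv, ec, elam, enA', enz', h9, mul_nonneg ht0.le hε.le]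
  have := le_of_mul_le_mul_left hgoal ht0
  linarith [this]

end Aux

theorem theta_pos (θ : ℕ → ℝ) (hθ0 : θ 0 = 1)
    (hθrec : ∀ k, θ (k+1) = (-(θ k)^2 + Real.sqrt ((θ k)^4 + 4*(θ k)^2))/2) :
    ∀ k, 0 < θ k := by
  intro k
  induction k with
  | zero => simp [hθ0]
  | succ n ih =>
    rw [hθrec]
    have h1 : (θ n)^2 < Real.sqrt ((θ n)^4 + 4*(θ n)^2) := by
      rw [show (θ n)^4 + 4*(θ n)^2 = ((θ n)^2)^2 + 4*(θ n)^2 by ring]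
      nlinarith [Real.sq_sqrt (by positivity : (0:ℝ) ≤ ((θ n)^2)^2 + 4*(θ n)^2),
        Real.sqrt_nonneg (((θ n)^2)^2 + 4*(θ n)^2), sq_nonneg (θ n), ih]
    linarith

theorem theta_id (θ : ℕ → ℝ) (hθ0 : θ 0 = 1)
    (hθrec : ∀ k, θ (k+1) = (-(θ k)^2 + Real.sqrt ((θ k)^4 + 4*(θ k)^2))/2) :
    ∀ k, (θ (k+1))^2 = (θ k)^2 * (1 - θ (k+1)) := by
  intro k
  have h1 : 2 * θ (k+1) + (θ k)^2 = Real.sqrt ((θ k)^4 + 4*(θ k)^2) := by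
    rw [hθrec]; ring
  have h2 := Real.sq_sqrt (by positivity : (0:ℝ) ≤ (θ k)^4 + 4*(θ k)^2)
  rw [← h1] at h2
  nlinarith [h2]

theorem theta_lt_one (θ : ℕ → ℝ) (hθ0 : θ 0 = 1)
    (hθrec : ∀ k, θ (k+1) = (-(θ k)^2 + Real.sqrt ((θ k)^4 + 4*(θ k)^2))/2) :
    ∀ k, θ (k+1) < 1 := by
  intro k
  nlinarith [theta_id θ hθ0 hθrec k, theta_pos θ hθ0 hθrec k,
    theta_pos θ hθ0 hθrec (k+1), sq_nonneg (θ (k+1))]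

theorem theta_le_one (θ : ℕ → ℝ) (hθ0 : θ 0 = 1)
    (hθrec : ∀ k, θ (k+1) = (-(θ k)^2 + Real.sqrt ((θ k)^4 + 4*(θ k)^2))/2) :
    ∀ k, θ k ≤ 1 := by
  intro k
  cases k with
  | zero => simp [hθ0]
  | succ n => exact (theta_lt_one θ hθ0 hθrec n).le

theorem theta_bound (θ : ℕ → ℝ) (hθ0 : θ 0 = 1)
    (hθrec : ∀ k, θ (k+1) = (-(θ k)^2 + Real.sqrt ((θ k)^4 + 4*(θ k)^2))/2) :
    ∀ k, θ k * ((k:ℝ) + 2) ≤ 2 := by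
  intro k
  induction k with
  | zero => simp [hθ0]
  | succ n ih =>
    by_contra hcon
    push_neg at hcon
    have hid := theta_id θ hθ0 hθrec n
    have hp := theta_pos θ hθ0 hθrec n
    have hp1 := theta_pos θ hθ0 hθrec (n+1)
    have h1 := theta_lt_one θ hθ0 hθrec n
    have hn : (0:ℝ) ≤ (n:ℝ) := Nat.cast_nonneg n
    push_cast at hcon ih ⊢
    nlinarith [mul_pos hp hp, mul_pos hp1 hp1, sq_nonneg (θ n * ((n:ℝ)+2) - 2),
      mul_le_mul_of_nonneg_left ih hp.le, sq_nonneg (θ (n+1) * ((n:ℝ)+3) - 2)]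

open scoped RealInnerProductSpace

/-- The convex subdifferential of `f` at `x`. -/
def subdiff {m : ℕ} (f : EuclideanSpace ℝ (Fin m) → ℝ)
    (x : EuclideanSpace ℝ (Fin m)) : Set (EuclideanSpace ℝ (Fin m)) :=
  {g | ∀ y, f x + ⟪g, y - x⟫ ≤ f y}

set_option maxHeartbeats 1000000 in
theorem fast_palm_convergence (m p : ℕ)
    (g h : EuclideanSpace ℝ (Fin m) → ℝ)
    (g' : EuclideanSpace ℝ (Fin m) → EuclideanSpace ℝ (Fin m)) (L : ℝ) (hL : 0 ≤ L)
    (hgconv : ConvexOn ℝ Set.univ g) (hhconv : ConvexOn ℝ Set.univ h)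
    (hhlsc : LowerSemicontinuous h)
    (hgrad : ∀ x, HasGradientAt g (g' x) x)
    (hlip : ∀ x y, ‖g' x - g' y‖ ≤ L * ‖x - y‖)
    (A : EuclideanSpace ℝ (Fin m) →L[ℝ] EuclideanSpace ℝ (Fin p))
    (b : EuclideanSpace ℝ (Fin p))
    (f : EuclideanSpace ℝ (Fin m) → ℝ) (hf : f = fun u => g u + h u)
    (θ β : ℕ → ℝ) (hθ0 : θ 0 = 1) (hβ0 : β 0 = 1)
    (hθrec : ∀ k, θ (k + 1) =
      (-(θ k) ^ 2 + Real.sqrt ((θ k) ^ 4 + 4 * (θ k) ^ 2)) / 2)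
    (hβ : ∀ k, β k = 1 / θ k)
    (x y z : ℕ → EuclideanSpace ℝ (Fin m))
    (lam : ℕ → EuclideanSpace ℝ (Fin p))
    (hy : ∀ k, y (k + 1) = (1 - θ k) • x k + θ k • z k)
    (hz : ∀ k, ∀ u : EuclideanSpace ℝ (Fin m),
      ⟪g' (y (k + 1)), z (k + 1)⟫ + h (z (k + 1)) + ⟪lam k, A (z (k + 1))⟫ +
          β k / 2 * ‖A (z (k + 1)) - b‖ ^ 2 +
          L * θ k / 2 * ‖z (k + 1) - z k‖ ^ 2 ≤
        ⟪g' (y (k + 1)), u⟫ + h u + ⟪lam k, A u⟫ + β k / 2 * ‖A u - b‖ ^ 2 +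
          L * θ k / 2 * ‖u - z k‖ ^ 2)
    (hx : ∀ k, x (k + 1) = (1 - θ k) • x k + θ k • z (k + 1))
    (hlam : ∀ k, lam (k + 1) = lam k + β k • (A (z (k + 1)) - b))
    (xs : EuclideanSpace ℝ (Fin m)) (lams : EuclideanSpace ℝ (Fin p))
    (hfeas : A xs = b)
    (hsubgrad : -(ContinuousLinearMap.adjoint A lams) ∈ subdiff f xs)
    (K : ℕ) :
    f (x (K + 1)) - f xs + ⟪lams, A (x (K + 1)) - b⟫ +
        1 / 2 * ‖A (x (K + 1)) - b‖ ^ 2 ≤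
      2 / (K + 2 : ℝ) ^ 2 * (L * ‖z 0 - xs‖ ^ 2 + ‖lam 0 - lams‖ ^ 2) := by
  have hθpos := theta_pos θ hθ0 hθrec
  have hθid := theta_id θ hθ0 hθrec
  have hθle1 := theta_le_one θ hθ0 hθrec
  have hcoefs : ∀ k, (1 - θ (k+1))/(θ (k+1))^2 = 1/(θ k)^2 := by
    intro k
    have h1 := hθpos (k+1)
    have h2 := hθpos k
    rw [div_eq_div_iff (by positivity) (by positivity)]
    linarith [hθid k]
  -- one-step descent of the Lyapunov function
  have key : ∀ k,
      (1 - θ (k+1))/(θ (k+1))^2 * (f (x (k+1)) - f xs + ⟪lams, A (x (k+1)) - b⟫ +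
        1/2*‖A (x (k+1)) - b‖^2) + 1/2*‖lam (k+1) - lams‖^2 + L/2*‖z (k+1) - xs‖^2 ≤
      (1 - θ k)/(θ k)^2 * (f (x k) - f xs + ⟪lams, A (x k) - b⟫ +
        1/2*‖A (x k) - b‖^2) + 1/2*‖lam k - lams‖^2 + L/2*‖z k - xs‖^2 := by
    intro k
    have ht0 : 0 < θ k := hθpos k
    have ht1 : θ k ≤ 1 := hθle1 k
    have htne : θ k ≠ 0 := ne_of_gt ht0
    -- descent lemma
    have S1 := my_descent g g' L hL hgrad hlip (x (k+1)) (y (k+1))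
    have eS2 : x (k+1) - y (k+1) = θ k • (z (k+1) - z k) := by
      rw [hx k, hy k]; module
    have eI : ⟪g' (y (k+1)), x (k+1) - y (k+1)⟫ =
        θ k * ⟪g' (y (k+1)), z (k+1)⟫ - θ k * ⟪g' (y (k+1)), z k⟫ := by
      rw [eS2, real_inner_smul_right, inner_sub_right]; ring
    have eN' : L/2*‖x (k+1) - y (k+1)‖^2 = L/2*((θ k)^2 * ‖z (k+1) - z k‖^2) := by
      rw [eS2, norm_smul, mul_pow, Real.norm_eq_abs, sq_abs]
    -- convexity of g at x k and xs
    have B := my_grad_convex g g' L hL hgconv hgrad hlip (y (k+1)) (x k)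
    have C := my_grad_convex g g' L hL hgconv hgrad hlip (y (k+1)) xs
    have B' := mul_le_mul_of_nonneg_left B (by linarith : (0:ℝ) ≤ 1 - θ k)
    have C' := mul_le_mul_of_nonneg_left C ht0.le
    have eB : (1 - θ k) * (g (y (k+1)) + ⟪g' (y (k+1)), x k - y (k+1)⟫) =
        (1-θ k)*g (y (k+1)) + (1-θ k)*⟪g' (y (k+1)), x k⟫
          - (1-θ k)*⟪g' (y (k+1)), y (k+1)⟫ := by
      rw [inner_sub_right]; ring
    have eC : θ k * (g (y (k+1)) + ⟪g' (y (k+1)), xs - y (k+1)⟫) =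
        θ k*g (y (k+1)) + θ k*⟪g' (y (k+1)), xs⟫ - θ k*⟪g' (y (k+1)), y (k+1)⟫ := by
      rw [inner_sub_right]; ring
    have ey : ⟪g' (y (k+1)), y (k+1)⟫ =
        (1-θ k)*⟪g' (y (k+1)), x k⟫ + θ k*⟪g' (y (k+1)), z k⟫ := by
      have e2 : ∀ v w : EuclideanSpace ℝ (Fin m), v = w →
          ⟪g' (y (k+1)), v⟫ = ⟪g' (y (k+1)), w⟫ := fun v w hvw => by rw [hvw]
      exact (e2 _ _ (hy k)).trans
        (by rw [inner_add_right, real_inner_smul_right, real_inner_smul_right])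
    -- convexity of h
    have S6 : h (x (k+1)) ≤ (1-θ k)*h (x k) + θ k*h (z (k+1)) := by
      rw [hx k]
      exact hhconv.2 (Set.mem_univ _) (Set.mem_univ _) (by linarith) ht0.le (by ring)
    -- strong minimizer property of z (k+1)
    have S7 := my_strong_min h hhconv A b (g' (y (k+1))) (lam k) (β k) (L * θ k)
      (by rw [hβ k]; positivity) (mul_nonneg hL ht0.le) (z k) (z (k+1)) (hz k) xs
    rw [hfeas, sub_self b, norm_zero, norm_sub_rev b (A (z (k+1))),
      norm_sub_rev xs (z (k+1)), norm_sub_rev xs (z k), hβ k] at S7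
    have hm7 := mul_le_mul_of_nonneg_left S7 ht0.le
    have hinvX : θ k * (1/θ k) * ‖A (z (k+1)) - b‖^2 = ‖A (z (k+1)) - b‖^2 := by
      field_simp
    have S7t : θ k*⟪g' (y (k+1)), z (k+1)⟫ + θ k*h (z (k+1))
        + θ k*⟪lam k, A (z (k+1))⟫ + 1/2*‖A (z (k+1)) - b‖^2
        + L*(θ k)^2/2*‖z (k+1) - z k‖^2 + 1/2*‖A (z (k+1)) - b‖^2
        + L*(θ k)^2/2*‖z (k+1) - xs‖^2 ≤
        θ k*⟪g' (y (k+1)), xs⟫ + θ k*h xs + θ k*⟪lam k, b⟫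
        + L*(θ k)^2/2*‖z k - xs‖^2 := by
      linarith [hm7, hinvX]
    have er1' : θ k * ⟪lam k, A (z (k+1))⟫ =
        θ k*⟪lam k, A (z (k+1)) - b⟫ + θ k*⟪lam k, b⟫ := by
      rw [inner_sub_right]; ring
    -- dual update identity
    have el : lam (k+1) - lams = (lam k - lams) + (1/θ k)•(A (z (k+1)) - b) := by
      rw [hlam k, hβ k]; abel
    have e3 : (θ k)^2*‖lam (k+1) - lams‖^2 = (θ k)^2*‖lam k - lams‖^2
        + 2*θ k*(⟪lam k, A (z (k+1)) - b⟫ - ⟪lams, A (z (k+1)) - b⟫)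
        + ‖A (z (k+1)) - b‖^2 := by
      rw [el, my_norm_add_smul, inner_sub_left]
      field_simp
    -- primal feasibility evolution
    have HAx : A (x (k+1)) - b = (1-θ k)•(A (x k) - b) + θ k•(A (z (k+1)) - b) := by
      rw [hx k, map_add, map_smul, map_smul]; module
    have eAx1 : ⟪lams, A (x (k+1)) - b⟫ = (1-θ k)*⟪lams, A (x k) - b⟫
        + θ k*⟪lams, A (z (k+1)) - b⟫ := by
      rw [HAx, inner_add_right, real_inner_smul_right, real_inner_smul_right]
    have eAx2 : ‖A (x (k+1)) - b‖^2 ≤ (1-θ k)*‖A (x k) - b‖^2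
        + θ k*‖A (z (k+1)) - b‖^2 := by
      rw [HAx, my_norm_combo]
      nlinarith [mul_nonneg (mul_nonneg ht0.le (by linarith : (0:ℝ) ≤ 1 - θ k))
        (sq_nonneg ‖A (x k) - b - (A (z (k+1)) - b)‖)]
    have hr_drop : (θ k/2 - 1/2)*‖A (z (k+1)) - b‖^2 ≤ 0 :=
      mul_nonpos_of_nonpos_of_nonneg (by linarith) (by positivity)
    have efx1 : f (x (k+1)) = g (x (k+1)) + h (x (k+1)) := by rw [hf]
    have efxk : f (x k) = g (x k) + h (x k) := by rw [hf]
    have efxs : f xs = g xs + h xs := by rw [hf]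
    have efxk' : θ k * f (x k) = θ k * g (x k) + θ k * h (x k) := by rw [efxk]; ring
    have efxs' : θ k * f xs = θ k * g xs + θ k * h xs := by rw [efxs]; ring
    have key1 : f (x (k+1)) - f xs + ⟪lams, A (x (k+1)) - b⟫ + 1/2*‖A (x (k+1)) - b‖^2
        + (θ k)^2/2*‖lam (k+1) - lams‖^2 + L*(θ k)^2/2*‖z (k+1) - xs‖^2 ≤
        (1-θ k)*(f (x k) - f xs + ⟪lams, A (x k) - b⟫ + 1/2*‖A (x k) - b‖^2)
        + (θ k)^2/2*‖lam k - lams‖^2 + L*(θ k)^2/2*‖z k - xs‖^2 := by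
      linarith [S1, eI, eN', B', eB, C', eC, ey, S6, S7t, er1', e3, eAx1, eAx2,
        hr_drop, efx1, efxk, efxs, efxk', efxs']
    rw [hcoefs k]
    refine le_of_mul_le_mul_left ?_ (show (0:ℝ) < (θ k)^2 by positivity)
    have eL2 : (θ k)^2 * (1/(θ k)^2 * (f (x (k+1)) - f xs + ⟪lams, A (x (k+1)) - b⟫ +
        1/2*‖A (x (k+1)) - b‖^2) + 1/2*‖lam (k+1) - lams‖^2 + L/2*‖z (k+1) - xs‖^2) =
        (f (x (k+1)) - f xs + ⟪lams, A (x (k+1)) - b⟫ + 1/2*‖A (x (k+1)) - b‖^2)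
        + (θ k)^2/2*‖lam (k+1) - lams‖^2 + L*(θ k)^2/2*‖z (k+1) - xs‖^2 := by
      field_simp
    have eR2 : (θ k)^2 * ((1 - θ k)/(θ k)^2 * (f (x k) - f xs + ⟪lams, A (x k) - b⟫ +
        1/2*‖A (x k) - b‖^2) + 1/2*‖lam k - lams‖^2 + L/2*‖z k - xs‖^2) =
        (1-θ k)*(f (x k) - f xs + ⟪lams, A (x k) - b⟫ + 1/2*‖A (x k) - b‖^2)
        + (θ k)^2/2*‖lam k - lams‖^2 + L*(θ k)^2/2*‖z k - xs‖^2 := by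
      field_simp
    linarith [key1, eL2, eR2]
  -- telescoping
  have chain : ∀ n, (1 - θ n)/(θ n)^2 * (f (x n) - f xs + ⟪lams, A (x n) - b⟫ +
      1/2*‖A (x n) - b‖^2) + 1/2*‖lam n - lams‖^2 + L/2*‖z n - xs‖^2 ≤
      1/2*‖lam 0 - lams‖^2 + L/2*‖z 0 - xs‖^2 := by
    intro n
    induction n with
    | zero => norm_num [hθ0]
    | succ n ih => exact le_trans (key n) ih
  have hch := chain (K+1)
  rw [hcoefs K] at hch
  have hKpos : (0:ℝ) < θ K := hθpos K
  have hKne : θ K ≠ 0 := ne_of_gt hKpos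
  have h2 : 1/(θ K)^2 * (f (x (K+1)) - f xs + ⟪lams, A (x (K+1)) - b⟫ +
      1/2*‖A (x (K+1)) - b‖^2) ≤ 1/2*‖lam 0 - lams‖^2 + L/2*‖z 0 - xs‖^2 := by
    have hn1 : (0:ℝ) ≤ 1/2*‖lam (K+1) - lams‖^2 := by positivity
    have hn2 : (0:ℝ) ≤ L/2*‖z (K+1) - xs‖^2 := by positivity
    linarith
  have h3 := mul_le_mul_of_nonneg_left h2 (sq_nonneg (θ K))
  have e4 : (θ K)^2 * (1/(θ K)^2 * (f (x (K+1)) - f xs + ⟪lams, A (x (K+1)) - b⟫ +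
      1/2*‖A (x (K+1)) - b‖^2)) = f (x (K+1)) - f xs + ⟪lams, A (x (K+1)) - b⟫ +
      1/2*‖A (x (K+1)) - b‖^2 := by
    field_simp
  have hE : f (x (K+1)) - f xs + ⟪lams, A (x (K+1)) - b⟫ + 1/2*‖A (x (K+1)) - b‖^2 ≤
      (θ K)^2 * (1/2*‖lam 0 - lams‖^2 + L/2*‖z 0 - xs‖^2) := by
    linarith [h3, e4]
  have hθK2 : (θ K)^2 * ((K:ℝ)+2)^2 ≤ 4 := by
    have h5 := theta_bound θ hθ0 hθrec K
    nlinarith [h5, hKpos, (show (0:ℝ) < (K:ℝ)+2 by positivity),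
      mul_pos hKpos (show (0:ℝ) < (K:ℝ)+2 by positivity)]
  have hpos2 : (0:ℝ) < ((K:ℝ)+2)^2 := by positivity
  have hRHS0 : (0:ℝ) ≤ 1/2*‖lam 0 - lams‖^2 + L/2*‖z 0 - xs‖^2 := by positivity
  rw [show (2:ℝ)/((K:ℝ)+2)^2 * (L*‖z 0 - xs‖^2 + ‖lam 0 - lams‖^2) =
    (2*(L*‖z 0 - xs‖^2 + ‖lam 0 - lams‖^2))/((K:ℝ)+2)^2 from by ring, le_div_iff₀ hpos2]
  have a1 := mul_le_mul_of_nonneg_right hE hpos2.le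
  have a2 := mul_le_mul_of_nonneg_left hθK2 hRHS0
  nlinarith [a1, a2]
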